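/- (Theorem 2, upper Shimogaki index) Let ψ ∈ Ψ(a,b) and G = G(ψ; a,b), with fundamental function φ(s) = sup_{p ∈ (a,b)} s^{1/p}/ψ(p) and dilation function M_G(t) = sup_{s>0} φ(st)/φ(s). Then the upper Shimogaki index β⁺(G) = lim_{t→∞} (log M_G(t))/(log t) exists and equals 1/a. -/

import Mathlib

noncomputable section

open MeasureTheory Filter Set Topology
open scoped ENNReal NNReal

/-- The set of exponents `p` with `a < p < b` (where `b : ℝ≥0∞` may be `∞`). -/
def expSet (a : ℝ) (b : ℝ≥0∞) : Set ℝ := {p : ℝ | a < p ∧ ENNReal.ofReal p < b}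

/-- The filter of real exponents `p` tending to `b` from below (`p → b⁻`);
when `b = ∞` this amounts to `p → ∞`. -/
def atBbelow (b : ℝ≥0∞) : Filter ℝ :=
  Filter.comap ENNReal.ofReal (nhdsWithin b (Set.Iio b))

/-- The class `EΨ(a,b)`: continuous `ψ` on `(a,b)` with `ψ(p) ≥ 1` and `ψ(b-0) = ∞`. -/
def IsEPsi (a : ℝ) (b : ℝ≥0∞) (ψ : ℝ → ℝ) : Prop :=
  ContinuousOn ψ (expSet a b) ∧ (∀ p ∈ expSet a b, 1 ≤ ψ p) ∧
    Filter.Tendsto ψ (atBbelow b) Filter.atTop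

/-- Norm of the Bilateral Grand Lebesgue space `G(ψ; a, b)` over a measure `μ`:
`‖f‖_{G(ψ)} = sup_{p ∈ (a,b)} ‖f‖_{L^p(μ)} / ψ(p)`, with values in `ℝ≥0∞`. -/
def GNorm {α : Type*} [MeasurableSpace α] (μ : Measure α) (a : ℝ) (b : ℝ≥0∞)
    (ψ : ℝ → ℝ) (f : α → ℝ) : ℝ≥0∞ :=
  ⨆ p ∈ expSet a b, eLpNorm f (ENNReal.ofReal p) μ / ENNReal.ofReal (ψ p)

/-- The class `Ψ(a,b)` (relative to a measure `μ`): positive continuous `ψ` on `(a,b)`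
with `ψ(b-0) = ∞`, admitting a representation `ψ(p) = ‖f‖_{L^p(μ)}` for `p ∈ (a,b)`, where
the measurable `f` lies in `L^p(μ)` for all `p ∈ (a,b)`. -/
def IsPsi {α : Type*} [MeasurableSpace α] (μ : Measure α) (a : ℝ) (b : ℝ≥0∞)
    (ψ : ℝ → ℝ) : Prop :=
  ContinuousOn ψ (expSet a b) ∧ (∀ p ∈ expSet a b, 0 < ψ p) ∧
    Filter.Tendsto ψ (atBbelow b) Filter.atTop ∧
    ∃ f : α → ℝ, AEStronglyMeasurable f μ ∧
      ∀ p ∈ expSet a b, eLpNorm f (ENNReal.ofReal p) μ = ENNReal.ofReal (ψ p)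

/-- The fundamental function `φ(G(ψ;a,b), s) = sup_{p ∈ (a,b)} s^{1/p}/ψ(p)`, real-valued. -/
def fundR (a : ℝ) (b : ℝ≥0∞) (ψ : ℝ → ℝ) (s : ℝ) : ℝ :=
  ⨆ p : expSet a b, s ^ (1 / (p : ℝ)) / ψ p

/-- The fundamental function `φ(G(ψ;a,b), δ) = sup_{p ∈ (a,b)} δ^{1/p}/ψ(p)`, `ℝ≥0∞`-valued. -/
def fundE (a : ℝ) (b : ℝ≥0∞) (ψ : ℝ → ℝ) (δ : ℝ≥0∞) : ℝ≥0∞ :=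
  ⨆ p ∈ expSet a b, δ ^ (1 / p) / ENNReal.ofReal (ψ p)

/-- The dilation function `M_G(t) = sup_{s > 0} φ(st)/φ(s)` built from the fundamental
function `φ(s) = sup_{p ∈ (a,b)} s^{1/p}/ψ(p)` of `G(ψ; a,b)`. -/
def MG (a : ℝ) (b : ℝ≥0∞) (ψ : ℝ → ℝ) (t : ℝ) : ℝ :=
  ⨆ s : Set.Ioi (0 : ℝ), fundR a b ψ ((s : ℝ) * t) / fundR a b ψ (s : ℝ)

/-- **Theorem 2, upper Shimogaki index.** Let `ψ ∈ Ψ(a,b)` (over `X = ℝ₊`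
with Lebesgue measure) and `G = G(ψ; a,b)`. Then the upper Shimogaki index
`β⁺(G) = lim_{t→∞} log M_G(t) / log t` exists and equals `1/a`. -/
private lemma aux_exists
    (a : ℝ) (b : ℝ≥0∞) (ha : 1 ≤ a) (hab : ENNReal.ofReal a < b)
    (ψ : ℝ → ℝ)
    (hpos : ∀ p ∈ expSet a b, 0 < ψ p)
    (f : ℝ → ℝ) (hfm : AEStronglyMeasurable f (volume.restrict (Set.Ioi (0:ℝ))))
    (hrep : ∀ p ∈ expSet a b,
      eLpNorm f (ENNReal.ofReal p) (volume.restrict (Set.Ioi (0:ℝ))) = ENNReal.ofReal (ψ p)) :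
    ∃ p0 ∈ expSet a b, ∃ m : ℝ, 0 < m ∧ ∀ p ∈ expSet a b, m ≤ ψ p := by
  set μ := volume.restrict (Set.Ioi (0:ℝ)) with hμdef
  have ha0 : (0:ℝ) < a := lt_of_lt_of_le one_pos ha
  -- construct p0
  obtain ⟨c, hc1, hc2⟩ := exists_between hab
  have hcne : c ≠ ⊤ := hc2.ne_top
  set p0 := c.toReal with hp0def
  have hcor : ENNReal.ofReal p0 = c := ENNReal.ofReal_toReal hcne
  have hp0a : a < p0 := by
    have := hc1; rw [← hcor] at this
    exact (ENNReal.ofReal_lt_ofReal_iff_of_nonneg ha0.le).mp this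
  have hp0mem : p0 ∈ expSet a b := ⟨hp0a, by rw [hcor]; exact hc2⟩
  have hp0pos : (0:ℝ) < p0 := lt_trans ha0 hp0a
  refine ⟨p0, hp0mem, ?_⟩
  -- replace f by a measurable representative
  obtain ⟨g, hgm, hfg⟩ := hfm
  have hrep' : ∀ p ∈ expSet a b,
      eLpNorm g (ENNReal.ofReal p) μ = ENNReal.ofReal (ψ p) := by
    intro p hp
    rw [← eLpNorm_congr_ae hfg]
    exact hrep p hp
  have hp0ne : ENNReal.ofReal p0 ≠ 0 := (ENNReal.ofReal_pos.mpr hp0pos).ne'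
  -- g is not a.e. zero
  have hgne : ¬ g =ᵐ[μ] 0 := by
    intro h
    have h0 : eLpNorm g (ENNReal.ofReal p0) μ = 0 :=
      (eLpNorm_eq_zero_iff hgm.aestronglyMeasurable hp0ne).mpr h
    rw [hrep' p0 hp0mem] at h0
    have : 0 < ENNReal.ofReal (ψ p0) := ENNReal.ofReal_pos.mpr (hpos p0 hp0mem)
    exact this.ne' h0
  have hU : {x | g x ≠ 0} ⊆ ⋃ n : ℕ, {x | (1:ℝ)/(n+1) ≤ |g x|} := by
    intro x hx
    obtain ⟨n, hn⟩ := exists_nat_one_div_lt (abs_pos.mpr hx)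
    exact Set.mem_iUnion.mpr ⟨n, hn.le⟩
  have hpos' : μ {x | g x ≠ 0} ≠ 0 := by
    intro h
    exact hgne (ae_iff.mpr (by simpa using h))
  obtain ⟨n, hn⟩ : ∃ n : ℕ, μ {x | (1:ℝ)/(n+1) ≤ |g x|} ≠ 0 := by
    by_contra h
    push_neg at h
    exact hpos' (measure_mono_null hU (measure_iUnion_null h))
  set ε : ℝ := (1:ℝ)/(n+1) with hεdef
  have hε : 0 < ε := by positivity
  set A := {x : ℝ | ε ≤ |g x|} with hAdef
  have hA : MeasurableSet A := measurableSet_le measurable_const hgm.measurable.abs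
  -- the key inequality
  have key : ∀ p ∈ expSet a b,
      ENNReal.ofReal ε * μ A ^ (1/p) ≤ ENNReal.ofReal (ψ p) := by
    intro p hp
    have hp' : (0:ℝ) < p := lt_trans ha0 hp.1
    have hpne : ENNReal.ofReal p ≠ 0 := (ENNReal.ofReal_pos.mpr hp').ne'
    have hptop : ENNReal.ofReal p ≠ ∞ := ENNReal.ofReal_ne_top
    have hconst : eLpNorm (A.indicator fun _ => ε) (ENNReal.ofReal p) μ
        = ‖ε‖₊ * μ A ^ (1/p) := by
      rw [eLpNorm_indicator_const hA hpne hptop, ENNReal.toReal_ofReal hp'.le, enorm_eq_nnnorm]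
    have hmono : eLpNorm (A.indicator fun _ => ε) (ENNReal.ofReal p) μ
        ≤ eLpNorm g (ENNReal.ofReal p) μ := by
      apply eLpNorm_mono fun x => ?_
      by_cases hx : x ∈ A
      · rw [Set.indicator_of_mem hx]
        rw [Real.norm_eq_abs, Real.norm_eq_abs, abs_of_pos hε]
        exact hx
      · rw [Set.indicator_of_notMem hx]
        simp [abs_nonneg]
    rw [hconst, hrep' p hp] at hmono
    rwa [← enorm_eq_nnnorm, Real.enorm_eq_ofReal hε.le] at hmono
  -- μ A is finite
  have hεne : ENNReal.ofReal ε ≠ 0 := (ENNReal.ofReal_pos.mpr hε).ne'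
  have hAfin : μ A ≠ ∞ := by
    intro h
    have h1 := key p0 hp0mem
    rw [h, ENNReal.top_rpow_of_pos (by positivity), ENNReal.mul_top hεne] at h1
    exact ENNReal.ofReal_ne_top (top_le_iff.mp h1)
  -- conclude
  set M : ℝ≥0∞ := min 1 (μ A) with hMdef
  have hMne : M ≠ ⊤ := ne_top_of_le_ne_top ENNReal.one_ne_top (min_le_left _ _)
  have hMpos : 0 < M := lt_min one_pos (pos_iff_ne_zero.mpr hn)
  refine ⟨ε * M.toReal, mul_pos hε (ENNReal.toReal_pos hMpos.ne' hMne), ?_⟩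
  intro p hp
  have hp' : (0:ℝ) < p := lt_trans ha0 hp.1
  have h1p1 : 1/p ≤ 1 := by
    rw [div_le_one hp']; linarith [hp.1, ha]
  have hμA : M ≤ μ A ^ (1/p) := by
    rcases le_total (μ A) 1 with h | h
    · calc M ≤ μ A := min_le_right _ _
        _ = μ A ^ (1:ℝ) := (ENNReal.rpow_one _).symm
        _ ≤ μ A ^ (1/p) := ENNReal.rpow_le_rpow_of_exponent_ge h h1p1
    · calc M ≤ 1 := min_le_left _ _
        _ = μ A ^ (0:ℝ) := (ENNReal.rpow_zero).symm
        _ ≤ μ A ^ (1/p) := ENNReal.rpow_le_rpow_of_exponent_le h (by positivity)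
  have h2 : ENNReal.ofReal (ε * M.toReal) ≤ ENNReal.ofReal (ψ p) := by
    rw [ENNReal.ofReal_mul hε.le, ENNReal.ofReal_toReal hMne]
    exact le_trans (mul_le_mul_right hμA _) (key p hp)
  exact (ENNReal.ofReal_le_ofReal_iff (hpos p hp).le).mp h2

private lemma aux_tendsto
    (a : ℝ) (b : ℝ≥0∞) (ha : 1 ≤ a) (hab : ENNReal.ofReal a < b)
    (ψ : ℝ → ℝ)
    (hpos : ∀ p ∈ expSet a b, 0 < ψ p)
    (p0 : ℝ) (hp0mem : p0 ∈ expSet a b)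
    (m : ℝ) (hm : 0 < m) (hmψ : ∀ p ∈ expSet a b, m ≤ ψ p) :
    Tendsto (fun t : ℝ => Real.log (MG a b ψ t) / Real.log t) atTop (𝓝 (1 / a)) := by
  have ha0 : (0:ℝ) < a := lt_of_lt_of_le one_pos ha
  haveI hne : Nonempty (expSet a b) := ⟨⟨p0, hp0mem⟩⟩
  have hppos : ∀ p : expSet a b, 0 < (p:ℝ) := fun p => lt_trans ha0 p.2.1
  have hexp : ∀ p : expSet a b, 1/(p:ℝ) ≤ 1/a := fun p =>
    one_div_le_one_div_of_le ha0 p.2.1.le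
  -- term bound
  have hterm : ∀ s : ℝ, 0 < s → ∀ p : expSet a b,
      s ^ (1/(p:ℝ)) / ψ p ≤ max (s ^ (1/a)) 1 / m := by
    intro s hs p
    have hnum : s ^ (1/(p:ℝ)) ≤ max (s ^ (1/a)) 1 := by
      rcases le_total 1 s with h | h
      · exact le_max_of_le_left (Real.rpow_le_rpow_of_exponent_le h (hexp p))
      · exact le_max_of_le_right
          (Real.rpow_le_one hs.le h (one_div_nonneg.mpr (hppos p).le))
    exact div_le_div₀ (le_trans zero_le_one (le_max_right _ _)) hnum hm (hmψ p p.2)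
  have hbdd : ∀ s : ℝ, 0 < s →
      BddAbove (Set.range fun p : expSet a b => s ^ (1/(p:ℝ)) / ψ p) := by
    intro s hs
    refine ⟨max (s ^ (1/a)) 1 / m, ?_⟩
    rintro x ⟨p, rfl⟩
    exact hterm s hs p
  have hfund_ge : ∀ s : ℝ, 0 < s → ∀ p : expSet a b,
      s ^ (1/(p:ℝ)) / ψ p ≤ fundR a b ψ s := fun s hs p => le_ciSup (hbdd s hs) p
  have hfund_pos : ∀ s : ℝ, 0 < s → 0 < fundR a b ψ s := by
    intro s hs
    refine lt_of_lt_of_le ?_ (hfund_ge s hs ⟨p0, hp0mem⟩)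
    exact div_pos (Real.rpow_pos_of_pos hs _) (hpos p0 hp0mem)
  -- key upper bound on fundR (s*t)
  have hC : ∀ s t : ℝ, 0 < s → 1 ≤ t →
      fundR a b ψ (s*t) ≤ t ^ (1/a) * fundR a b ψ s := by
    intro s t hs ht
    have ht0 : (0:ℝ) < t := lt_of_lt_of_le one_pos ht
    apply ciSup_le
    intro p
    calc (s*t) ^ (1/(p:ℝ)) / ψ p
        = s ^ (1/(p:ℝ)) * t ^ (1/(p:ℝ)) / ψ p := by
          rw [Real.mul_rpow hs.le ht0.le]
      _ ≤ s ^ (1/(p:ℝ)) * t ^ (1/a) / ψ p := by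
          have h2 : s ^ (1/(p:ℝ)) * t ^ (1/(p:ℝ)) ≤ s ^ (1/(p:ℝ)) * t ^ (1/a) :=
            mul_le_mul_of_nonneg_left
              (Real.rpow_le_rpow_of_exponent_le ht (hexp p))
              (Real.rpow_nonneg hs.le _)
          exact (div_le_div_iff_of_pos_right (hpos p p.2)).mpr h2
      _ = t ^ (1/a) * (s ^ (1/(p:ℝ)) / ψ p) := by ring
      _ ≤ t ^ (1/a) * fundR a b ψ s := by
          exact mul_le_mul_of_nonneg_left (hfund_ge s hs p) (Real.rpow_nonneg ht0.le _)
  have hMGterm : ∀ t : ℝ, 1 ≤ t → ∀ s : Set.Ioi (0:ℝ),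
      fundR a b ψ ((s:ℝ)*t) / fundR a b ψ (s:ℝ) ≤ t ^ (1/a) := by
    intro t ht s
    rw [div_le_iff₀ (hfund_pos s s.2)]
    exact hC s t s.2 ht
  have hMG_le : ∀ t : ℝ, 1 ≤ t → MG a b ψ t ≤ t ^ (1/a) := fun t ht =>
    ciSup_le (hMGterm t ht)
  have hMG_ge : ∀ t : ℝ, 1 ≤ t → fundR a b ψ t / fundR a b ψ 1 ≤ MG a b ψ t := by
    intro t ht
    have hb : BddAbove (Set.range fun s : Set.Ioi (0:ℝ) =>
        fundR a b ψ ((s:ℝ)*t) / fundR a b ψ (s:ℝ)) := by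
      refine ⟨t ^ (1/a), ?_⟩
      rintro x ⟨s, rfl⟩
      exact hMGterm t ht s
    have := le_ciSup hb (⟨1, by norm_num⟩ : Set.Ioi (0:ℝ))
    simpa [one_mul, MG] using this
  -- final limit argument
  rw [Metric.tendsto_atTop]
  intro ε hε
  set δ : ℝ := min (ε/4) ((p0 - a)/2) with hδdef
  have hp0a : a < p0 := hp0mem.1
  have hδpos : 0 < δ := lt_min (by positivity) (by linarith)
  set p1 : ℝ := a + δ with hp1def
  have hp1a : a < p1 := by simp [hp1def]; linarith
  have hp1p0 : p1 ≤ p0 := by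
    have : δ ≤ (p0 - a)/2 := min_le_right _ _
    simp [hp1def]; linarith
  have hp1mem : p1 ∈ expSet a b :=
    ⟨hp1a, lt_of_le_of_lt (ENNReal.ofReal_le_ofReal hp1p0) hp0mem.2⟩
  have hp1pos : (0:ℝ) < p1 := lt_trans ha0 hp1a
  have hgap : 1/a - 1/p1 ≤ ε/4 := by
    have h1 : 1/a - 1/p1 = δ / (a * p1) := by
      field_simp
      ring
    have h2 : (1:ℝ) ≤ a * p1 := one_le_mul_of_one_le_of_one_le ha (by linarith)
    calc 1/a - 1/p1 = δ / (a*p1) := h1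
      _ ≤ δ := div_le_self hδpos.le h2
      _ ≤ ε/4 := min_le_left _ _
  set L : ℝ := Real.log (ψ p1 * fundR a b ψ 1) with hLdef
  set C : ℝ := |L| with hCdef
  have hC0 : 0 ≤ C := abs_nonneg _
  refine ⟨max 2 (Real.exp (2*(C+1)/ε)), ?_⟩
  intro t htN
  have ht2 : (2:ℝ) ≤ t := le_trans (le_max_left _ _) htN
  have ht1 : (1:ℝ) < t := by linarith
  have ht0 : (0:ℝ) < t := by linarith
  have hlogt : 0 < Real.log t := Real.log_pos ht1
  have hlogtN : 2*(C+1)/ε ≤ Real.log t := by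
    have := Real.log_le_log (Real.exp_pos _) (le_trans (le_max_right _ _) htN)
    rwa [Real.log_exp] at this
  have hMGpos : 0 < MG a b ψ t := by
    refine lt_of_lt_of_le ?_ (hMG_ge t ht1.le)
    exact div_pos (hfund_pos t ht0) (hfund_pos 1 one_pos)
  -- upper estimate
  have hupper : Real.log (MG a b ψ t) / Real.log t ≤ 1/a := by
    have h1 : Real.log (MG a b ψ t) ≤ (1/a) * Real.log t := by
      calc Real.log (MG a b ψ t) ≤ Real.log (t ^ (1/a)) :=
            Real.log_le_log hMGpos (hMG_le t ht1.le)
        _ = (1/a) * Real.log t := Real.log_rpow ht0 _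
    rw [div_le_iff₀ hlogt]
    linarith
  -- lower estimate
  have hψp1 : 0 < ψ p1 := hpos p1 hp1mem
  have hf1 : 0 < fundR a b ψ 1 := hfund_pos 1 one_pos
  have hlb : t ^ (1/p1) / (ψ p1 * fundR a b ψ 1) ≤ MG a b ψ t := by
    have h1 : t ^ (1/p1) / ψ p1 ≤ fundR a b ψ t := hfund_ge t ht0 ⟨p1, hp1mem⟩
    calc t ^ (1/p1) / (ψ p1 * fundR a b ψ 1)
        = (t ^ (1/p1) / ψ p1) / fundR a b ψ 1 := by rw [div_div]
      _ ≤ fundR a b ψ t / fundR a b ψ 1 := by gcongr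
      _ ≤ MG a b ψ t := hMG_ge t ht1.le
  have hlower : 1/p1 - C / Real.log t ≤ Real.log (MG a b ψ t) / Real.log t := by
    have hpos' : 0 < t ^ (1/p1) / (ψ p1 * fundR a b ψ 1) := by positivity
    have h1 : Real.log (t ^ (1/p1) / (ψ p1 * fundR a b ψ 1))
        = (1/p1) * Real.log t - L := by
      rw [Real.log_div (by positivity) (by positivity), Real.log_rpow ht0]
    have h2 : (1/p1) * Real.log t - L ≤ Real.log (MG a b ψ t) := by
      rw [← h1]
      exact Real.log_le_log hpos' hlb
    have h3 : L ≤ C := le_abs_self _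
    rw [le_div_iff₀ hlogt, sub_mul, div_mul_cancel₀ _ hlogt.ne']
    linarith
  have hCsmall : C / Real.log t ≤ ε/2 := by
    rw [div_le_iff₀ hlogt]
    have hεne : ε ≠ 0 := hε.ne'
    have hx : (ε/2) * (2*(C+1)/ε) = C + 1 := by field_simp
    nlinarith [mul_le_mul_of_nonneg_left hlogtN (le_of_lt (half_pos hε))]
  rw [Real.dist_eq, abs_sub_comm, abs_of_nonneg (by linarith)]
  have : 1/p1 ≤ Real.log (MG a b ψ t) / Real.log t + C / Real.log t := by linarith
  linarith

theorem upper_Shimogaki_index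
    (a : ℝ) (b : ℝ≥0∞) (ha : 1 ≤ a) (hab : ENNReal.ofReal a < b)
    (ψ : ℝ → ℝ) (hψ : IsPsi (volume.restrict (Set.Ioi (0 : ℝ))) a b ψ) :
    Tendsto (fun t : ℝ => Real.log (MG a b ψ t) / Real.log t) atTop (𝓝 (1 / a)) := by
  obtain ⟨hcont, hpos, htend, f, hfm, hrep⟩ := hψ
  obtain ⟨p0, hp0mem, m, hm, hmψ⟩ := aux_exists a b ha hab ψ hpos f hfm hrep
  exact aux_tendsto a b ha hab ψ hpos p0 hp0mem m hm hmψ
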